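/- Let X be a topological space, B a basis of opens, K a category admitting projective limits, and F a presheaf on B with values in K. Then the induced presheaf F' on X (defined by F'(U) = lim_{V ∈ B, V ⊆ U} F(V)) is a sheaf if and only if F satisfies the basis sheaf condition (F₀): for every U ∈ B, every cover of U by basic opens U_α ∈ B contained in U, and every object T of K, composition with the restrictions gives a bijection between Hom_K(T, F(U)) and the set of families (f_α) ∈ ∏ Hom_K(T, F(U_α)) satisfying ρ_V^{U_α} ∘ f_α = ρ_V^{U_β} ∘ f_β for every pair (α, β) and every V ∈ B with V ⊆ U_α ∩ U_β. -/

import Mathlib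

open CategoryTheory CategoryTheory.Limits TopologicalSpace Opposite

universe u v w

/-- The sheaf axiom (F). -/
def IsSheafF {X : Type u} [TopologicalSpace X] {K : Type w} [Category.{v} K]
    (F : (Opens X)ᵒᵖ ⥤ K) : Prop :=
  ∀ ⦃ι : Type u⦄ (Uα : ι → Opens X) (T : K),
    (∀ f g : T ⟶ F.obj (op (iSup Uα)),
      (∀ i, f ≫ F.map (homOfLE (le_iSup Uα i)).op =
            g ≫ F.map (homOfLE (le_iSup Uα i)).op) → f = g) ∧
    (∀ fα : ∀ i, T ⟶ F.obj (op (Uα i)),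
      (∀ i j, fα i ≫ F.map (homOfLE (inf_le_left : Uα i ⊓ Uα j ≤ Uα i)).op =
              fα j ≫ F.map (homOfLE (inf_le_right : Uα i ⊓ Uα j ≤ Uα j)).op) →
      ∃ f : T ⟶ F.obj (op (iSup Uα)),
        ∀ i, f ≫ F.map (homOfLE (le_iSup Uα i)).op = fα i)
variable {X : Type u} [TopologicalSpace X] {K : Type w} [Category.{v} K]

/-- The (basic) opens belonging to `ℬ` that are contained in `U`. -/
def BasisLe (ℬ : Set (Opens X)) (U : Opens X) : Type u := {V : ↥ℬ // (V : Opens X) ≤ U}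

instance (ℬ : Set (Opens X)) (U : Opens X) : Preorder (BasisLe ℬ U) :=
  Subtype.preorder _

/-- Inclusion of the basic opens contained in `U` into the basic opens. -/
def basisLeIncl (ℬ : Set (Opens X)) (U : Opens X) : BasisLe ℬ U ⥤ ↥ℬ :=
  Monotone.functor (f := fun V => V.1) fun _ _ h => h

/-- The diagram of values of a presheaf on a basis over the basic opens contained
in `U`. -/
def basisDiagram (ℬ : Set (Opens X)) (F : (↥ℬ)ᵒᵖ ⥤ K) (U : Opens X) :
    (BasisLe ℬ U)ᵒᵖ ⥤ K :=
  (basisLeIncl ℬ U).op ⋙ F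

/-- For `U' ≤ U`, basic opens contained in `U'` are contained in `U`. -/
def basisLeMap (ℬ : Set (Opens X)) {U' U : Opens X} (h : U' ≤ U) :
    BasisLe ℬ U' ⥤ BasisLe ℬ U :=
  Monotone.functor (f := fun V => ⟨V.1, V.2.trans h⟩) fun _ _ hab => hab

variable [HasLimitsOfSize.{u, u} K]

/-- The presheaf on `X` induced by a presheaf on a basis:
`F'(U) = lim_{V ∈ ℬ, V ⊆ U} F(V)`. -/
noncomputable def inducedPresheaf (ℬ : Set (Opens X)) (F : (↥ℬ)ᵒᵖ ⥤ K) : (Opens X)ᵒᵖ ⥤ K where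
  obj U := limit (basisDiagram ℬ F U.unop)
  map {U V} i := limit.pre (basisDiagram ℬ F U.unop) (basisLeMap ℬ i.unop.le).op
  map_id U := by
    apply limit.hom_ext
    intro j
    exact (limit.pre_π _ _ _).trans (Category.id_comp _).symm
  map_comp {U V W} i j := by
    apply limit.hom_ext
    intro k
    refine (limit.pre_π _ _ _).trans (Eq.symm ((Category.assoc _ _ _).trans ?_))
    refine (congrArg
        (fun t => limit.pre (basisDiagram ℬ F (unop U)) (basisLeMap ℬ i.unop.le).op ≫ t)
        (limit.pre_π (basisDiagram ℬ F (unop V)) (basisLeMap ℬ j.unop.le).op k)).trans ?_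
    exact limit.pre_π _ _ _

/-- The sheaf axiom (F₀) for a presheaf on a basis of opens. -/
def IsSheafF₀ (ℬ : Set (Opens X)) (F : (↥ℬ)ᵒᵖ ⥤ K) : Prop :=
  ∀ (U : ↥ℬ) ⦃ι : Type u⦄ (Uα : ι → ↥ℬ) (hle : ∀ i, (Uα i : Opens X) ≤ (U : Opens X)),
    (U : Opens X) ≤ (⨆ i, (Uα i : Opens X)) → ∀ T : K,
    (∀ f g : T ⟶ F.obj (op U),
      (∀ i, f ≫ F.map (homOfLE (hle i)).op = g ≫ F.map (homOfLE (hle i)).op) → f = g) ∧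
    (∀ fα : ∀ i, T ⟶ F.obj (op (Uα i)),
      (∀ (i j) (V : ↥ℬ) (h1 : (V : Opens X) ≤ (Uα i : Opens X))
         (h2 : (V : Opens X) ≤ (Uα j : Opens X)),
        fα i ≫ F.map (homOfLE h1).op = fα j ≫ F.map (homOfLE h2).op) →
      ∃ f : T ⟶ F.obj (op U), ∀ i, f ≫ F.map (homOfLE (hle i)).op = fα i)


set_option linter.unusedSectionVars false

namespace InducedPresheafProofAux

variable (ℬ : Set (Opens X)) (F : (↥ℬ)ᵒᵖ ⥤ K)

lemma map_congr_aux {a b : (↥ℬ)ᵒᵖ} (f g : a ⟶ b) : F.map f = F.map g := by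
  congr 1
  exact Quiver.Hom.unop_inj (Subsingleton.elim _ _)

lemma mapMap_aux {a b c : ↥ℬ} (h1 : (b : Opens X) ≤ (a : Opens X))
    (h2 : (c : Opens X) ≤ (b : Opens X)) :
    F.map (homOfLE h1).op ≫ F.map (homOfLE h2).op = F.map (homOfLE (h2.trans h1)).op := by
  rw [← F.map_comp]
  exact map_congr_aux ℬ F _ _

lemma piRes_aux (U : Opens X) (V V' : BasisLe ℬ U)
    (h : ((V'.1 : ↥ℬ) : Opens X) ≤ ((V.1 : ↥ℬ) : Opens X)) :
    limit.π (basisDiagram ℬ F U) (op V) ≫ F.map (homOfLE h).op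
      = limit.π (basisDiagram ℬ F U) (op V') := by
  have hle : V' ≤ V := h
  have hw := limit.w (basisDiagram ℬ F U) (homOfLE hle).op
  rw [← hw]
  congr 1

lemma induced_map_pi_aux {U' U : Opens X} (h : U' ≤ U) (W : BasisLe ℬ U') :
    (inducedPresheaf ℬ F).map (homOfLE h).op ≫ limit.π (basisDiagram ℬ F U') (op W)
      = limit.π (basisDiagram ℬ F U) (op ⟨W.1, W.2.trans h⟩) :=
  limit.pre_π _ _ _

/-- The canonical cone exhibiting `F(V)` as a cone over the diagram of basic opens
contained in `V`, for `V` itself basic. -/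
noncomputable def basisCone_aux (V : ↥ℬ) : Cone (basisDiagram ℬ F (V : Opens X)) where
  pt := F.obj (op V)
  π :=
    { app := fun W => F.map (homOfLE W.unop.2).op
      naturality := fun W W' m => by
        dsimp [basisDiagram, basisLeIncl]
        erw [Category.id_comp, ← F.map_comp]
        exact map_congr_aux ℬ F _ _ }

noncomputable def eAux (V : ↥ℬ) : F.obj (op V) ⟶ limit (basisDiagram ℬ F (V : Opens X)) :=
  limit.lift _ (basisCone_aux ℬ F V)

lemma e_pi_aux (V : ↥ℬ) (W : BasisLe ℬ (V : Opens X)) :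
    eAux ℬ F V ≫ limit.π (basisDiagram ℬ F (V : Opens X)) (op W)
      = F.map (homOfLE W.2).op :=
  limit.lift_π _ _

lemma e_pi_self_aux (V : ↥ℬ) :
    eAux ℬ F V ≫ limit.π (basisDiagram ℬ F (V : Opens X)) (op ⟨V, le_rfl⟩) = 𝟙 _ := by
  erw [e_pi_aux]
  have : F.map (homOfLE (le_refl ((V : ↥ℬ) : Opens X))).op = F.map (𝟙 (op V)) :=
    map_congr_aux ℬ F _ _
  erw [this, F.map_id]

lemma e_nat_aux (V V' : ↥ℬ) (h : (V' : Opens X) ≤ (V : Opens X)) :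
    eAux ℬ F V ≫ (inducedPresheaf ℬ F).map (homOfLE h).op
      = F.map (homOfLE h).op ≫ eAux ℬ F V' := by
  apply limit.hom_ext
  intro W
  erw [Category.assoc, Category.assoc, induced_map_pi_aux, e_pi_aux, e_pi_aux,
    mapMap_aux]
  exact map_congr_aux ℬ F _ _

/-- Transporting the sheaf condition along `iSup Uα = U`. -/
lemma isSheafF_apply_aux {G : (Opens X)ᵒᵖ ⥤ K} (hG : IsSheafF G) {ι : Type u}
    (Uα : ι → Opens X) (U : Opens X) (hle : ∀ i, Uα i ≤ U) (hcov : U ≤ iSup Uα) (T : K) :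
    (∀ f g : T ⟶ G.obj (op U),
      (∀ i, f ≫ G.map (homOfLE (hle i)).op = g ≫ G.map (homOfLE (hle i)).op) → f = g) ∧
    (∀ fα : ∀ i, T ⟶ G.obj (op (Uα i)),
      (∀ i j, fα i ≫ G.map (homOfLE (inf_le_left : Uα i ⊓ Uα j ≤ Uα i)).op =
              fα j ≫ G.map (homOfLE (inf_le_right : Uα i ⊓ Uα j ≤ Uα j)).op) →
      ∃ f : T ⟶ G.obj (op U), ∀ i, f ≫ G.map (homOfLE (hle i)).op = fα i) := by
  obtain rfl : iSup Uα = U := le_antisymm (iSup_le hle) hcov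
  exact hG Uα T

/-- Covering a basic open by basic opens subordinate to a cover. -/
lemma cover_aux (hB : Opens.IsBasis ℬ) (V : Opens X) {ι' : Type u} (Uα : ι' → Opens X)
    (h : V ≤ iSup Uα) :
    V ≤ ⨆ (W : {W : ↥ℬ // (W : Opens X) ≤ V ∧ ∃ i, (W : Opens X) ≤ Uα i}),
        ((W.1 : ↥ℬ) : Opens X) := by
  intro x hx
  obtain ⟨i, hi⟩ : ∃ i, x ∈ Uα i := by
    have := h hx
    simpa [Opens.mem_iSup] using this
  obtain ⟨W, hWB, hxW, hWle⟩ := Opens.isBasis_iff_nbhd.mp hB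
    (show x ∈ V ⊓ Uα i from ⟨hx, hi⟩)
  exact Opens.mem_iSup.mpr
    ⟨⟨⟨W, hWB⟩, hWle.trans inf_le_left, ⟨i, hWle.trans inf_le_right⟩⟩, hxW⟩

end InducedPresheafProofAux

open InducedPresheafProofAux in
/-- The induced presheaf `F'` is a sheaf iff the presheaf `F` on the basis
satisfies the condition (F₀). -/
theorem inducedPresheaf_isSheaf_iff (ℬ : Set (Opens X)) (hB : Opens.IsBasis ℬ)
    (F : (↥ℬ)ᵒᵖ ⥤ K) :
    IsSheafF (inducedPresheaf ℬ F) ↔ IsSheafF₀ ℬ F := by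
  classical
  constructor
  · intro hF U ι Uα hle hcov T
    have H := isSheafF_apply_aux hF (fun i => (Uα i : Opens X)) (U : Opens X) hle hcov T
    constructor
    · -- separation
      intro f g hfg
      have h1 : f ≫ eAux ℬ F U = g ≫ eAux ℬ F U := by
        apply H.1
        intro i
        erw [Category.assoc, Category.assoc, e_nat_aux, ← Category.assoc, ← Category.assoc,
          hfg i]
      have e1 : f = (f ≫ eAux ℬ F U) ≫ limit.π (basisDiagram ℬ F (U : Opens X)) (op ⟨U, le_rfl⟩) := by
              erw [Category.assoc, e_pi_self_aux, Category.comp_id]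
      have e3 : (g ≫ eAux ℬ F U) ≫ limit.π (basisDiagram ℬ F (U : Opens X)) (op ⟨U, le_rfl⟩) = g := by
              erw [Category.assoc, e_pi_self_aux, Category.comp_id]
      erw [h1] at e1
      exact e1.trans e3
    · -- gluing
      intro fα hcomp
      obtain ⟨f', hf'⟩ := H.2 (fun i => fα i ≫ eAux ℬ F (Uα i)) (by
        intro i j
        apply limit.hom_ext
        intro Wop
        obtain ⟨W⟩ := Wop
        erw [Category.assoc, Category.assoc, Category.assoc, Category.assoc,
          induced_map_pi_aux, induced_map_pi_aux, e_pi_aux, e_pi_aux]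
        exact hcomp i j W.1 _ _)
      refine ⟨f' ≫ limit.π (basisDiagram ℬ F (U : Opens X)) (op ⟨U, le_rfl⟩), fun i => ?_⟩
      erw [Category.assoc,
        piRes_aux ℬ F (U : Opens X) ⟨U, le_rfl⟩ ⟨Uα i, hle i⟩ (hle i),
        ← induced_map_pi_aux ℬ F (hle i) ⟨Uα i, le_rfl⟩,
        ← Category.assoc, hf' i, Category.assoc, e_pi_self_aux, Category.comp_id]
  · intro hF₀
    intro ι Uα T
    constructor
    · -- separation
      intro f g hfg
      apply limit.hom_ext
      intro Vop
      obtain ⟨V⟩ := Vop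
      have hcov := cover_aux ℬ hB ((V.1 : ↥ℬ) : Opens X) Uα V.2
      refine (hF₀ V.1 (fun W : {W : ↥ℬ // (W : Opens X) ≤ ((V.1 : ↥ℬ) : Opens X) ∧
          ∃ i, (W : Opens X) ≤ Uα i} => W.1) (fun W => W.2.1) hcov T).1 _ _ ?_
      intro W
      obtain ⟨i, hWi⟩ := W.2.2
      have key : ∀ h : T ⟶ limit (basisDiagram ℬ F (iSup Uα)),
          (h ≫ limit.π (basisDiagram ℬ F (iSup Uα)) (op V)) ≫ F.map (homOfLE W.2.1).op
            = (h ≫ (inducedPresheaf ℬ F).map (homOfLE (le_iSup Uα i)).op)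
                ≫ limit.π (basisDiagram ℬ F (Uα i)) (op ⟨W.1, hWi⟩) := by
        intro h
        erw [Category.assoc,
          piRes_aux ℬ F (iSup Uα) V ⟨W.1, W.2.1.trans V.2⟩ W.2.1,
          Category.assoc, induced_map_pi_aux]
        rfl
      erw [key f, key g, hfg i]
      rfl
    · -- gluing
      intro fα hcomp
      have hwd : ∀ (W : ↥ℬ) (i j : ι) (hi : (W : Opens X) ≤ Uα i) (hj : (W : Opens X) ≤ Uα j),
          fα i ≫ limit.π (basisDiagram ℬ F (Uα i)) (op ⟨W, hi⟩)
            = fα j ≫ limit.π (basisDiagram ℬ F (Uα j)) (op ⟨W, hj⟩) := by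
        intro W i j hi hj
        have h := congrArg
          (fun t => t ≫ limit.π (basisDiagram ℬ F (Uα i ⊓ Uα j)) (op ⟨W, le_inf hi hj⟩))
          (hcomp i j)
        erw [Category.assoc, Category.assoc, induced_map_pi_aux, induced_map_pi_aux] at h
        exact h
      have hexists : ∀ V : BasisLe ℬ (iSup Uα), ∃ gV : T ⟶ F.obj (op V.1),
          ∀ (W : ↥ℬ) (hWV : (W : Opens X) ≤ ((V.1 : ↥ℬ) : Opens X)) (i : ι)
            (hWi : (W : Opens X) ≤ Uα i),
            gV ≫ F.map (homOfLE hWV).op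
              = fα i ≫ limit.π (basisDiagram ℬ F (Uα i)) (op ⟨W, hWi⟩) := by
        intro V
        have hcov := cover_aux ℬ hB ((V.1 : ↥ℬ) : Opens X) Uα V.2
        obtain ⟨gV, hgV⟩ := (hF₀ V.1 (fun W : {W : ↥ℬ // (W : Opens X) ≤ ((V.1 : ↥ℬ) : Opens X) ∧
            ∃ i, (W : Opens X) ≤ Uα i} => W.1) (fun W => W.2.1) hcov T).2
          (fun W => fα W.2.2.choose ≫
            limit.π (basisDiagram ℬ F (Uα W.2.2.choose)) (op ⟨W.1, W.2.2.choose_spec⟩)) (by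
          intro a b Z h1 h2
          erw [Category.assoc, Category.assoc,
            piRes_aux ℬ F (Uα a.2.2.choose) ⟨a.1, a.2.2.choose_spec⟩
              ⟨Z, h1.trans a.2.2.choose_spec⟩ h1,
            piRes_aux ℬ F (Uα b.2.2.choose) ⟨b.1, b.2.2.choose_spec⟩
              ⟨Z, h2.trans b.2.2.choose_spec⟩ h2]
          exact hwd Z _ _ _ _)
        refine ⟨gV, fun W hWV i hWi => ?_⟩
        exact (hgV ⟨W, hWV, ⟨i, hWi⟩⟩).trans (hwd W _ i _ hWi)
      choose g hg using hexists
      have hgcomp : ∀ (V V' : BasisLe ℬ (iSup Uα))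
          (h : ((V'.1 : ↥ℬ) : Opens X) ≤ ((V.1 : ↥ℬ) : Opens X)),
          g V ≫ F.map (homOfLE h).op = g V' := by
        intro V V' h
        have hcov := cover_aux ℬ hB ((V'.1 : ↥ℬ) : Opens X) Uα V'.2
        refine (hF₀ V'.1 (fun W : {W : ↥ℬ // (W : Opens X) ≤ ((V'.1 : ↥ℬ) : Opens X) ∧
            ∃ i, (W : Opens X) ≤ Uα i} => W.1) (fun W => W.2.1) hcov T).1 _ _ ?_
        intro W
        obtain ⟨i, hWi⟩ := W.2.2
        rw [Category.assoc, mapMap_aux, hg V W.1 (W.2.1.trans h) i hWi,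
          hg V' W.1 W.2.1 i hWi]
      refine ⟨limit.lift _
        ({ pt := T
           π :=
            { app := fun V => g V.unop
              naturality := fun V V' m => by
                dsimp only [Functor.const_obj_obj, Functor.const_obj_map]
                erw [Category.id_comp, ← hgcomp V.unop V'.unop (leOfHom m.unop)]
                congr 1 } } : Cone (basisDiagram ℬ F (iSup Uα))), fun i => ?_⟩
      apply limit.hom_ext
      intro Wop
      obtain ⟨W⟩ := Wop
      erw [Category.assoc, induced_map_pi_aux, limit.lift_π]
      have hid : F.map (homOfLE (le_refl ((W.1 : ↥ℬ) : Opens X))).op = 𝟙 (F.obj (op W.1)) := by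
        rw [show (homOfLE (le_refl ((W.1 : ↥ℬ) : Opens X))).op = 𝟙 (op W.1) from
          Quiver.Hom.unop_inj (Subsingleton.elim _ _), F.map_id]
      have h2 := hg ⟨W.1, W.2.trans (le_iSup Uα i)⟩ W.1 le_rfl i W.2
      rw [hid, Category.comp_id] at h2
      exact h2
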